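/- Let H ∈ C¹(ℝⁿ \ {0}) be positively homogeneous of degree d with non-negative values, and let B ∈ C¹([0, +∞)) with B(0) = 0. Assume that either d > 1, or d = 1 and B'(0) = 0. Then H extends, by setting H(0) := 0, to a continuous function on ℝⁿ, the composition B∘H is of class C¹(ℝⁿ), and ∂ᵢ(B∘H)(0) = 0 = lim_{x → 0} B'(H(x)) ∂ᵢH(x) for each i = 1, …, n. -/

import Mathlib

open scoped InnerProductSpace Topology

noncomputable section

set_option maxHeartbeats 1000000 in
/-- Lemma 2.2: let `H ∈ C¹(ℝⁿ \ {0})` be positively homogeneous of degree `d`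
with non-negative values, extended by `H(0) = 0`, and let `B ∈ C¹([0, +∞))` with `B(0) = 0`.
If either `d > 1`, or `d = 1` and `B'(0) = 0`, then `H` is continuous on `ℝⁿ`, the composition
`B ∘ H` is of class `C¹(ℝⁿ)`, and `∂ᵢ(B∘H)(0) = 0 = lim_{x → 0} B'(H(x)) ∂ᵢH(x)`. -/
theorem composition_C1_up_to_origin {n : ℕ} (d : ℝ)
    (H : EuclideanSpace ℝ (Fin n) → ℝ) (B : ℝ → ℝ)
    (hreg : ContDiffOn ℝ 1 H {(0 : EuclideanSpace ℝ (Fin n))}ᶜ)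
    (hhom : ∀ t : ℝ, 0 < t → ∀ ξ : EuclideanSpace ℝ (Fin n), ξ ≠ 0 →
      H (t • ξ) = t ^ d * H ξ)
    (hnonneg : ∀ ξ : EuclideanSpace ℝ (Fin n), 0 ≤ H ξ) (hH0 : H 0 = 0)
    (hB : ContDiffOn ℝ 1 B (Set.Ici 0)) (hB0 : B 0 = 0)
    (hd : 1 < d ∨ (d = 1 ∧ derivWithin B (Set.Ici 0) 0 = 0)) :
    Continuous H ∧
    ContDiff ℝ 1 (fun x => B (H x)) ∧
    fderiv ℝ (fun x => B (H x)) 0 = 0 ∧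
    Filter.Tendsto (fun x => derivWithin B (Set.Ici 0) (H x) • gradient H x)
      (𝓝[{(0 : EuclideanSpace ℝ (Fin n))}ᶜ] 0) (𝓝 0) := by
  have hd1 : (1:ℝ) ≤ d := hd.elim le_of_lt fun h => h.1.ge
  have hd0 : (0:ℝ) < d := lt_of_lt_of_le one_pos hd1
  have hopen : IsOpen ({(0 : EuclideanSpace ℝ (Fin n))}ᶜ) := isOpen_compl_singleton
  have hdiffH : ∀ x : EuclideanSpace ℝ (Fin n), x ≠ 0 → DifferentiableAt ℝ H x := fun x hx =>
    (hreg.differentiableOn one_ne_zero).differentiableAt (hopen.mem_nhds hx)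
  have hcontH' : ContinuousOn (fderiv ℝ H) {(0 : EuclideanSpace ℝ (Fin n))}ᶜ :=
    hreg.continuousOn_fderiv_of_isOpen hopen le_rfl
  have hsub : Metric.sphere (0 : EuclideanSpace ℝ (Fin n)) 1 ⊆ {0}ᶜ := by
    intro y hy
    rw [mem_sphere_zero_iff_norm] at hy
    intro hy0
    rw [Set.mem_singleton_iff] at hy0
    rw [hy0, norm_zero] at hy
    norm_num at hy
  obtain ⟨M₁, hM₁⟩ := (isCompact_sphere (0 : EuclideanSpace ℝ (Fin n)) 1).exists_bound_of_continuousOn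
    (hreg.continuousOn.mono hsub)
  obtain ⟨M₂, hM₂⟩ := (isCompact_sphere (0 : EuclideanSpace ℝ (Fin n)) 1).exists_bound_of_continuousOn
    (hcontH'.mono hsub)
  set M : ℝ := max M₁ (max M₂ 0) with hMdef
  have hM0 : 0 ≤ M := le_max_of_le_right (le_max_right _ _)
  have hMH : ∀ y : EuclideanSpace ℝ (Fin n), ‖y‖ = 1 → H y ≤ M := by
    intro y hy
    have h := hM₁ y (mem_sphere_zero_iff_norm.2 hy)
    calc H y ≤ |H y| := le_abs_self _
      _ = ‖H y‖ := (Real.norm_eq_abs _).symm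
      _ ≤ M₁ := h
      _ ≤ M := le_max_left _ _
  have hMF : ∀ y : EuclideanSpace ℝ (Fin n), ‖y‖ = 1 → ‖fderiv ℝ H y‖ ≤ M := fun y hy =>
    le_trans (hM₂ y (mem_sphere_zero_iff_norm.2 hy)) (le_max_of_le_right (le_max_left _ _))
  -- scaling of the derivative
  have hscale : ∀ t : ℝ, 0 < t → ∀ u : EuclideanSpace ℝ (Fin n), u ≠ 0 →
      t • fderiv ℝ H (t • u) = t ^ d • fderiv ℝ H u := by
    intro t ht u hu
    have htu : t • u ≠ 0 := smul_ne_zero (ne_of_gt ht) hu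
    have hL : HasFDerivAt (fun ξ : EuclideanSpace ℝ (Fin n) => t • ξ)
        (t • ContinuousLinearMap.id ℝ (EuclideanSpace ℝ (Fin n))) u :=
      ((ContinuousLinearMap.id ℝ (EuclideanSpace ℝ (Fin n))).hasFDerivAt).const_smul t
    have h1 : HasFDerivAt (fun ξ : EuclideanSpace ℝ (Fin n) => H (t • ξ))
        ((fderiv ℝ H (t • u)).comp (t • ContinuousLinearMap.id ℝ (EuclideanSpace ℝ (Fin n)))) u :=
      ((hdiffH _ htu).hasFDerivAt).comp u hL
    have h2 : HasFDerivAt (fun ξ : EuclideanSpace ℝ (Fin n) => t ^ d * H ξ)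
        (t ^ d • fderiv ℝ H u) u := ((hdiffH u hu).hasFDerivAt).const_mul (t ^ d)
    have heq : (fun ξ : EuclideanSpace ℝ (Fin n) => H (t • ξ)) =ᶠ[𝓝 u]
        fun ξ => t ^ d * H ξ := by
      filter_upwards [hopen.mem_nhds hu] with ξ hξ
      exact hhom t ht ξ hξ
    have h3 : HasFDerivAt (fun ξ : EuclideanSpace ℝ (Fin n) => H (t • ξ))
        (t ^ d • fderiv ℝ H u) u := h2.congr_of_eventuallyEq heq
    have h4 := h1.unique h3
    calc t • fderiv ℝ H (t • u)
        = (fderiv ℝ H (t • u)).comp (t • ContinuousLinearMap.id ℝ (EuclideanSpace ℝ (Fin n))) := by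
          ext v
          simp
      _ = t ^ d • fderiv ℝ H u := h4
  have hux : ∀ x : EuclideanSpace ℝ (Fin n), x ≠ 0 →
      ∃ u : EuclideanSpace ℝ (Fin n), ‖u‖ = 1 ∧ u ≠ 0 ∧ ‖x‖ • u = x := by
    intro x hx
    have hr : (0:ℝ) < ‖x‖ := norm_pos_iff.2 hx
    refine ⟨‖x‖⁻¹ • x, ?_, ?_, ?_⟩
    · rw [norm_smul, norm_inv, norm_norm, inv_mul_cancel₀ hr.ne']
    · exact smul_ne_zero (inv_ne_zero hr.ne') hx
    · exact smul_inv_smul₀ hr.ne' x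
  have hkeyH : ∀ x : EuclideanSpace ℝ (Fin n), x ≠ 0 → H x ≤ M * ‖x‖ ^ d := by
    intro x hx
    obtain ⟨u, hu1, hu0, hux'⟩ := hux x hx
    have hr : (0:ℝ) < ‖x‖ := norm_pos_iff.2 hx
    have h := hhom ‖x‖ hr u hu0
    rw [hux'] at h
    calc H x = ‖x‖ ^ d * H u := h
      _ ≤ ‖x‖ ^ d * M :=
        mul_le_mul_of_nonneg_left (hMH u hu1) (Real.rpow_nonneg (norm_nonneg x) d)
      _ = M * ‖x‖ ^ d := mul_comm _ _
  have hkeyF : ∀ x : EuclideanSpace ℝ (Fin n), x ≠ 0 →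
      ‖fderiv ℝ H x‖ ≤ M * ‖x‖ ^ (d - 1) := by
    intro x hx
    obtain ⟨u, hu1, hu0, hux'⟩ := hux x hx
    have hr : (0:ℝ) < ‖x‖ := norm_pos_iff.2 hx
    have h := hscale ‖x‖ hr u hu0
    rw [hux'] at h
    have hn := congrArg norm h
    rw [norm_smul, norm_smul, Real.norm_eq_abs, Real.norm_eq_abs, abs_of_pos hr,
      abs_of_pos (Real.rpow_pos_of_pos hr d)] at hn
    have hsplit : ‖x‖ ^ d = ‖x‖ * ‖x‖ ^ (d - 1) := by
      have h' := Real.rpow_add hr 1 (d - 1)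
      rw [Real.rpow_one] at h'
      rw [show (1:ℝ) + (d - 1) = d by ring] at h'
      exact h'
    rw [hsplit, mul_assoc] at hn
    have heq := mul_left_cancel₀ hr.ne' hn
    rw [heq]
    calc ‖x‖ ^ (d - 1) * ‖fderiv ℝ H u‖ ≤ ‖x‖ ^ (d - 1) * M :=
        mul_le_mul_of_nonneg_left (hMF u hu1) (Real.rpow_nonneg (norm_nonneg x) _)
      _ = M * ‖x‖ ^ (d - 1) := mul_comm _ _
  have hHbound : ∀ x : EuclideanSpace ℝ (Fin n), H x ≤ M * ‖x‖ ^ d := by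
    intro x
    by_cases hx : x = 0
    · simp [hx, hH0, Real.zero_rpow hd0.ne']
    · exact hkeyH x hx
  have hrpow : ∀ p : ℝ, 0 < p →
      Filter.Tendsto (fun x : EuclideanSpace ℝ (Fin n) => ‖x‖ ^ p) (𝓝 0) (𝓝 0) := by
    intro p hp
    have h1 : Filter.Tendsto (fun x : EuclideanSpace ℝ (Fin n) => ‖x‖) (𝓝 0) (𝓝 0) :=
      tendsto_norm_zero
    have h2 : ContinuousAt (fun s : ℝ => s ^ p) 0 :=
      Real.continuousAt_rpow_const 0 p (Or.inr hp.le)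
    have h3 := h2.tendsto.comp h1
    rw [Real.zero_rpow hp.ne'] at h3
    exact h3
  have hcont0 : ContinuousAt H 0 := by
    rw [ContinuousAt, hH0]
    have hb : ∀ x : EuclideanSpace ℝ (Fin n), ‖H x‖ ≤ M * ‖x‖ ^ d := fun x => by
      rw [Real.norm_eq_abs, abs_of_nonneg (hnonneg x)]; exact hHbound x
    have ht : Filter.Tendsto (fun x : EuclideanSpace ℝ (Fin n) => M * ‖x‖ ^ d) (𝓝 0) (𝓝 0) := by
      simpa using (hrpow d hd0).const_mul M
    exact squeeze_zero_norm hb ht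
  have hHcont : Continuous H := by
    rw [continuous_iff_continuousAt]
    intro x
    by_cases hx : x = 0
    · subst hx; exact hcont0
    · exact hreg.continuousOn.continuousAt (hopen.mem_nhds hx)
  have hB'cont : ContinuousOn (derivWithin B (Set.Ici 0)) (Set.Ici 0) :=
    hB.continuousOn_derivWithin (uniqueDiffOn_Ici 0) le_rfl
  -- one-sided Lipschitz estimate for B near 0
  have lipB : ∀ ε : ℝ, 0 < ε → ∃ δ : ℝ, 0 < δ ∧ ∀ s ∈ Set.Icc (0:ℝ) δ,
      |B s| ≤ (|derivWithin B (Set.Ici 0) 0| + ε) * s := by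
    intro ε hε
    have hc : Filter.Tendsto (fun t => |derivWithin B (Set.Ici 0) t|) (𝓝[Set.Ici 0] 0)
        (𝓝 |derivWithin B (Set.Ici 0) 0|) :=
      continuous_abs.continuousAt.tendsto.comp (hB'cont 0 Set.self_mem_Ici).tendsto
    have hev : ∀ᶠ t in 𝓝[Set.Ici 0] 0,
        |derivWithin B (Set.Ici 0) t| ≤ |derivWithin B (Set.Ici 0) 0| + ε :=
      hc.eventually_le_const (lt_add_of_pos_right _ hε)
    obtain ⟨δ, hδ, hball⟩ := Metric.mem_nhdsWithin_iff.1 hev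
    refine ⟨δ / 2, half_pos hδ, ?_⟩
    have hconv : Convex ℝ (Set.Icc (0:ℝ) (δ/2)) := convex_Icc _ _
    have hder : ∀ s ∈ Set.Icc (0:ℝ) (δ/2),
        HasDerivWithinAt B (derivWithin B (Set.Ici 0) s) (Set.Icc (0:ℝ) (δ/2)) s := by
      intro s hs
      exact ((hB.differentiableOn one_ne_zero s hs.1).hasDerivWithinAt).mono Set.Icc_subset_Ici_self
    have hbd : ∀ s ∈ Set.Icc (0:ℝ) (δ/2),
        ‖derivWithin B (Set.Ici 0) s‖ ≤ |derivWithin B (Set.Ici 0) 0| + ε := by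
      intro s hs
      rw [Real.norm_eq_abs]
      apply hball
      refine ⟨?_, hs.1⟩
      rw [Metric.mem_ball, Real.dist_eq, sub_zero, abs_of_nonneg hs.1]
      exact lt_of_le_of_lt hs.2 (half_lt_self hδ)
    intro s hs
    have h := hconv.norm_image_sub_le_of_norm_hasDerivWithin_le hder hbd
      ⟨le_refl (0:ℝ), (half_pos hδ).le⟩ hs
    rwa [hB0, sub_zero, sub_zero, Real.norm_eq_abs, Real.norm_eq_abs, abs_of_nonneg hs.1] at h
  have hHT : Filter.Tendsto H (𝓝[{(0 : EuclideanSpace ℝ (Fin n))}ᶜ] 0) (𝓝[Set.Ici 0] 0) := by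
    rw [tendsto_nhdsWithin_iff]
    constructor
    · have ht := hcont0.tendsto
      rw [hH0] at ht
      exact ht.mono_left nhdsWithin_le_nhds
    · exact Filter.Eventually.of_forall fun x => hnonneg x
  have hB'H : Filter.Tendsto (fun x => derivWithin B (Set.Ici 0) (H x))
      (𝓝[{(0 : EuclideanSpace ℝ (Fin n))}ᶜ] 0) (𝓝 (derivWithin B (Set.Ici 0) 0)) :=
    (hB'cont 0 Set.self_mem_Ici).tendsto.comp hHT
  have habs : Filter.Tendsto (fun x : EuclideanSpace ℝ (Fin n) =>
      |derivWithin B (Set.Ici 0) (H x)|) (𝓝[{(0 : EuclideanSpace ℝ (Fin n))}ᶜ] 0)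
      (𝓝 |derivWithin B (Set.Ici 0) 0|) :=
    continuous_abs.continuousAt.tendsto.comp hB'H
  have hnormT : Filter.Tendsto (fun x : EuclideanSpace ℝ (Fin n) =>
      |derivWithin B (Set.Ici 0) (H x)| * ‖fderiv ℝ H x‖)
      (𝓝[{(0 : EuclideanSpace ℝ (Fin n))}ᶜ] 0) (𝓝 0) := by
    rcases hd with hdgt | ⟨hdeq, hB'0⟩
    · have h2 : Filter.Tendsto (fun x : EuclideanSpace ℝ (Fin n) => M * ‖x‖ ^ (d-1))
          (𝓝[{(0 : EuclideanSpace ℝ (Fin n))}ᶜ] 0) (𝓝 0) := by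
        simpa using (((hrpow (d-1) (by linarith)).const_mul M).mono_left nhdsWithin_le_nhds)
      have hg : Filter.Tendsto (fun x : EuclideanSpace ℝ (Fin n) =>
          |derivWithin B (Set.Ici 0) (H x)| * (M * ‖x‖ ^ (d-1)))
          (𝓝[{(0 : EuclideanSpace ℝ (Fin n))}ᶜ] 0) (𝓝 0) := by
        simpa using habs.mul h2
      apply squeeze_zero'
        (Filter.Eventually.of_forall fun x => mul_nonneg (abs_nonneg _) (norm_nonneg _)) ?_ hg
      filter_upwards [self_mem_nhdsWithin] with x hx
      exact mul_le_mul_of_nonneg_left (hkeyF x hx) (abs_nonneg _)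
    · have hg : Filter.Tendsto (fun x : EuclideanSpace ℝ (Fin n) =>
          |derivWithin B (Set.Ici 0) (H x)| * M)
          (𝓝[{(0 : EuclideanSpace ℝ (Fin n))}ᶜ] 0) (𝓝 0) := by
        have h := habs.mul_const M
        rwa [hB'0, abs_zero, zero_mul] at h
      apply squeeze_zero'
        (Filter.Eventually.of_forall fun x => mul_nonneg (abs_nonneg _) (norm_nonneg _)) ?_ hg
      filter_upwards [self_mem_nhdsWithin] with x hx
      have h := hkeyF x hx
      rw [hdeq, sub_self, Real.rpow_zero, mul_one] at h
      exact mul_le_mul_of_nonneg_left h (abs_nonneg _)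
  have hmin : ∀ x : EuclideanSpace ℝ (Fin n), H x = 0 → fderiv ℝ H x = 0 := by
    intro x hx0
    apply IsLocalMin.fderiv_eq_zero
    exact Filter.Eventually.of_forall fun y => by rw [hx0]; exact hnonneg y
  have hcomp : ∀ x : EuclideanSpace ℝ (Fin n), x ≠ 0 → HasFDerivAt (fun y => B (H y))
      (derivWithin B (Set.Ici 0) (H x) • fderiv ℝ H x) x := by
    intro x hx
    rcases (hnonneg x).lt_or_eq with hpos | heq0
    · have hIci : Set.Ici (0:ℝ) ∈ 𝓝 (H x) := Ici_mem_nhds hpos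
      have hBd : HasDerivAt B (derivWithin B (Set.Ici 0) (H x)) (H x) :=
        ((hB.differentiableOn one_ne_zero (H x) (hnonneg x)).hasDerivWithinAt).hasDerivAt hIci
      exact hBd.comp_hasFDerivAt x (hdiffH x hx).hasFDerivAt
    · have hx0 : H x = 0 := heq0.symm
      have hf0 : fderiv ℝ H x = 0 := hmin x hx0
      rw [hf0, smul_zero]
      obtain ⟨δ, hδ, hlip⟩ := lipB 1 one_pos
      have hevδ : ∀ᶠ y in 𝓝 x, H y ≤ δ := by
        have ht : Filter.Tendsto H (𝓝 x) (𝓝 (H x)) := hHcont.continuousAt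
        rw [hx0] at ht
        exact ht.eventually_le_const hδ
      have hsmallH : (fun y => H y) =o[𝓝 x] fun y => y - x := by
        have h := (hdiffH x hx).hasFDerivAt
        rw [hf0] at h
        have h2 := h.isLittleO
        simpa [hx0] using h2
      have hBig : (fun y => B (H y)) =O[𝓝 x] fun y => H y := by
        rw [Asymptotics.isBigO_iff]
        refine ⟨|derivWithin B (Set.Ici 0) 0| + 1, ?_⟩
        filter_upwards [hevδ] with y hy
        rw [Real.norm_eq_abs, Real.norm_eq_abs, abs_of_nonneg (hnonneg y)]
        exact hlip (H y) ⟨hnonneg y, hy⟩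
      have hfinal := hBig.trans_isLittleO hsmallH
      rw [hasFDerivAt_iff_isLittleO]
      simpa [hx0, hB0] using hfinal
  have hlittle0 : (fun y : EuclideanSpace ℝ (Fin n) => B (H y)) =o[𝓝 0] fun y => y := by
    rw [Asymptotics.isLittleO_iff]
    intro c hc
    have htH : Filter.Tendsto H (𝓝 (0 : EuclideanSpace ℝ (Fin n))) (𝓝 0) := by
      have ht := hcont0.tendsto
      rwa [hH0] at ht
    rcases hd with hdgt | ⟨hdeq, hB'0⟩
    · obtain ⟨δ, hδ, hlip⟩ := lipB 1 one_pos
      set C := |derivWithin B (Set.Ici 0) 0| + 1 with hC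
      have hCpos : (0:ℝ) < C := add_pos_of_nonneg_of_pos (abs_nonneg _) one_pos
      have hev1 : ∀ᶠ y : EuclideanSpace ℝ (Fin n) in 𝓝 0, H y ≤ δ :=
        htH.eventually_le_const hδ
      have hev2 : ∀ᶠ y : EuclideanSpace ℝ (Fin n) in 𝓝 0, C * (M * ‖y‖ ^ (d - 1)) ≤ c := by
        have ht : Filter.Tendsto (fun y : EuclideanSpace ℝ (Fin n) => C * (M * ‖y‖ ^ (d-1)))
            (𝓝 0) (𝓝 0) := by
          simpa using ((hrpow (d-1) (by linarith)).const_mul M).const_mul C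
        exact ht.eventually_le_const hc
      filter_upwards [hev1, hev2] with y h1 h2
      rw [Real.norm_eq_abs]
      calc |B (H y)| ≤ C * H y := hlip (H y) ⟨hnonneg y, h1⟩
        _ ≤ C * (M * ‖y‖ ^ d) := mul_le_mul_of_nonneg_left (hHbound y) hCpos.le
        _ = C * (M * ‖y‖ ^ (d-1)) * ‖y‖ := by
            by_cases hy : y = (0 : EuclideanSpace ℝ (Fin n))
            · simp [hy, Real.zero_rpow hd0.ne']
            · have hr : (0:ℝ) < ‖y‖ := norm_pos_iff.2 hy
              have h' := Real.rpow_add hr (d - 1) 1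
              rw [Real.rpow_one] at h'
              rw [show d - 1 + 1 = d by ring] at h'
              rw [h']
              ring
        _ ≤ c * ‖y‖ := mul_le_mul_of_nonneg_right h2 (norm_nonneg y)
    · have hM1 : (0:ℝ) < M + 1 := by linarith
      obtain ⟨δ, hδ, hlip⟩ := lipB (c / (M + 1)) (div_pos hc hM1)
      have hev1 : ∀ᶠ y : EuclideanSpace ℝ (Fin n) in 𝓝 0, H y ≤ δ :=
        htH.eventually_le_const hδ
      filter_upwards [hev1] with y h1
      rw [Real.norm_eq_abs]
      have hb := hlip (H y) ⟨hnonneg y, h1⟩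
      rw [hB'0, abs_zero, zero_add] at hb
      calc |B (H y)| ≤ c / (M + 1) * H y := hb
        _ ≤ c / (M + 1) * (M * ‖y‖ ^ d) :=
            mul_le_mul_of_nonneg_left (hHbound y) (div_pos hc hM1).le
        _ = c * (M / (M+1)) * ‖y‖ := by rw [hdeq, Real.rpow_one]; ring
        _ ≤ c * ‖y‖ := by
            apply mul_le_mul_of_nonneg_right ?_ (norm_nonneg y)
            exact mul_le_of_le_one_right hc.le ((div_le_one hM1).2 (by linarith))
  have hcomp0 : HasFDerivAt (fun y => B (H y))
      (0 : EuclideanSpace ℝ (Fin n) →L[ℝ] ℝ) 0 := by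
    rw [hasFDerivAt_iff_isLittleO]
    simpa [hH0, hB0] using hlittle0
  have hdiffAll : Differentiable ℝ (fun y => B (H y)) := by
    intro x
    by_cases hx : x = 0
    · rw [hx]; exact hcomp0.differentiableAt
    · exact (hcomp x hx).differentiableAt
  have hfd0 : fderiv ℝ (fun y => B (H y)) 0 = 0 := hcomp0.fderiv
  have hfdeq : ∀ x : EuclideanSpace ℝ (Fin n), x ≠ 0 → fderiv ℝ (fun y => B (H y)) x
      = derivWithin B (Set.Ici 0) (H x) • fderiv ℝ H x := fun x hx => (hcomp x hx).fderiv
  have hT2 : Filter.Tendsto (fderiv ℝ fun y => B (H y))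
      (𝓝[{(0 : EuclideanSpace ℝ (Fin n))}ᶜ] 0) (𝓝 0) := by
    apply squeeze_zero_norm' ?_ hnormT
    filter_upwards [self_mem_nhdsWithin] with x hx
    rw [hfdeq x hx, norm_smul, Real.norm_eq_abs]
  have hcontfd : Continuous (fderiv ℝ fun y => B (H y)) := by
    rw [continuous_iff_continuousAt]
    intro x
    by_cases hx : x = 0
    · subst hx
      rw [ContinuousAt, hfd0]
      rw [← nhdsNE_sup_pure (0 : EuclideanSpace ℝ (Fin n)),
        Filter.tendsto_sup]
      constructor
      · exact hT2
      · have h := tendsto_pure_nhds (fderiv ℝ fun y => B (H y)) (0 : EuclideanSpace ℝ (Fin n))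
        rwa [hfd0] at h
    · have hevx : (fderiv ℝ fun y => B (H y)) =ᶠ[𝓝 x]
          fun y => derivWithin B (Set.Ici 0) (H y) • fderiv ℝ H y := by
        filter_upwards [hopen.mem_nhds hx] with y hy
        exact hfdeq y hy
      have hc1 : ContinuousAt (fun y : EuclideanSpace ℝ (Fin n) =>
          derivWithin B (Set.Ici 0) (H y)) x := by
        have h1 : Filter.Tendsto H (𝓝 x) (𝓝[Set.Ici 0] (H x)) := by
          rw [tendsto_nhdsWithin_iff]
          exact ⟨hHcont.continuousAt, Filter.Eventually.of_forall hnonneg⟩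
        exact (hB'cont (H x) (hnonneg x)).tendsto.comp h1
      have hc2 : ContinuousAt (fderiv ℝ H) x := hcontH'.continuousAt (hopen.mem_nhds hx)
      exact (hc1.smul hc2).congr_of_eventuallyEq hevx
  refine ⟨hHcont, contDiff_one_iff_fderiv.2 ⟨hdiffAll, hcontfd⟩, hfd0, ?_⟩
  apply squeeze_zero_norm' ?_ hnormT
  filter_upwards [self_mem_nhdsWithin] with x hx
  have hg : ‖gradient H x‖ = ‖fderiv ℝ H x‖ := by
    show ‖(InnerProductSpace.toDual ℝ (EuclideanSpace ℝ (Fin n))).symm (fderiv ℝ H x)‖ = _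
    exact LinearIsometryEquiv.norm_map _ _
  rw [norm_smul, Real.norm_eq_abs, hg]

end
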